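/- Fix integers m and n with 2 ≤ m ≤ n−2. For each integer j with m ≤ j ≤ n−2 define γ_j := ((m−1)/2) · 1/(j(j−1)) · ∏_{i=m}^{j} (2i)/(2i+1), and for m−1 ≤ j ≤ n−2 define σ_j := Σ_{i=m}^{j} γ_i (so σ_{m−1} = 0). Then for every integer j with m ≤ j ≤ n−2 one has j(1 − σ_j) − (j−1)(1 − σ_{j−1}) = (1 + σ_j)/2. -/

import Mathlib

/-- The recursion `j(1 − σ_j) − (j−1)(1 − σ_{j−1}) = (1 + σ_j)/2` for
`γ_j = ((m−1)/2) · 1/(j(j−1)) · ∏_{i=m}^{j} (2i)/(2i+1)` and `σ_j = Σ_{i=m}^{j} γ_i`. -/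
theorem statement8 (m n : ℕ) (hm : 2 ≤ m) (hmn : m ≤ n - 2)
    (γ : ℕ → ℝ)
    (hγ : ∀ j, m ≤ j → j ≤ n - 2 →
      γ j = ((m : ℝ) - 1) / 2 * (1 / ((j : ℝ) * ((j : ℝ) - 1))) *
        ∏ i ∈ Finset.Icc m j, (2 * (i : ℝ)) / (2 * (i : ℝ) + 1))
    (σ : ℕ → ℝ)
    (hσ : ∀ j, m - 1 ≤ j → j ≤ n - 2 → σ j = ∑ i ∈ Finset.Icc m j, γ i)
    (j : ℕ) (hj1 : m ≤ j) (hj2 : j ≤ n - 2) :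
    (j : ℝ) * (1 - σ j) - ((j : ℝ) - 1) * (1 - σ (j - 1)) = (1 + σ j) / 2 := by
  have key : ∀ k, m ≤ k → k ≤ n - 2 → 3 * σ k + 2 * ((k : ℝ) - 1) * γ k = 1 := by
    intro k hk1
    induction k, hk1 using Nat.le_induction with
    | base =>
      intro h2
      have hmR : (2 : ℝ) ≤ (m : ℝ) := by exact_mod_cast hm
      have hσm : σ m = γ m := by
        rw [hσ m (by omega) h2, Finset.Icc_self, Finset.sum_singleton]
      have hγm := hγ m le_rfl h2
      rw [Finset.Icc_self, Finset.prod_singleton] at hγm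
      rw [hσm, hγm]
      have h1 : (m : ℝ) ≠ 0 := by positivity
      have h2' : (m : ℝ) - 1 ≠ 0 := by nlinarith
      have h3 : 2 * (m : ℝ) + 1 ≠ 0 := by positivity
      field_simp
      ring
    | succ k hk ih =>
      intro h2
      have hk2 : k ≤ n - 2 := by omega
      have ih' := ih hk2
      have hkR : (2 : ℝ) ≤ (k : ℝ) := by exact_mod_cast le_trans hm hk
      have hσk : σ k = ∑ i ∈ Finset.Icc m k, γ i := hσ k (by omega) hk2
      have hσk1 : σ (k + 1) = σ k + γ (k + 1) := by
        rw [hσ (k + 1) (by omega) h2, Finset.sum_Icc_succ_top (by omega : m ≤ k + 1),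
          ← hσk]
      have hγk := hγ k hk hk2
      have hγk1 := hγ (k + 1) (by omega) h2
      rw [Finset.prod_Icc_succ_top (by omega : m ≤ k + 1)] at hγk1
      have hσval : σ k = (1 - 2 * ((k : ℝ) - 1) * γ k) / 3 := by linarith
      rw [hσk1, hσval, hγk, hγk1]
      push_cast
      have h1 : (k : ℝ) ≠ 0 := by positivity
      have h2' : (k : ℝ) - 1 ≠ 0 := by nlinarith
      have h3 : (k : ℝ) + 1 ≠ 0 := by positivity
      have h4 : 2 * ((k : ℝ) + 1) + 1 ≠ 0 := by positivity
      have h5 : (k : ℝ) + 1 - 1 ≠ 0 := by simpa using h1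
      generalize (∏ i ∈ Finset.Icc m k, (2 * (i : ℝ)) / (2 * (i : ℝ) + 1)) = P
      field_simp
      ring
  have hkey := key j hj1 hj2
  have hjR : (2 : ℝ) ≤ (j : ℝ) := by exact_mod_cast le_trans hm hj1
  have hσj : σ j = ∑ i ∈ Finset.Icc m j, γ i := hσ j (by omega) hj2
  have hsplit : σ j = σ (j - 1) + γ j := by
    have hj : j - 1 + 1 = j := by omega
    rw [hσj, ← hj, Finset.sum_Icc_succ_top (by omega : m ≤ j - 1 + 1),
      ← hσ (j - 1) (by omega) (by omega)]
    rw [hj]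
  have hσj1 : σ (j - 1) = σ j - γ j := by linarith
  rw [hσj1]
  linarith
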